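/- Expected projected gain gradient: Assume each row a_{i,l} is a centred isotropic random vector (E a_{i,l} = 0 and E a_{i,l} a_{i,l}ᵀ = I_n). Write γ = 1_m + ε and d* = 1_m + ω with ε, ω ∈ 1⊥_m (possible since 1_mᵀγ = m and 1_mᵀd* = m). Then E ∇⊥_γ f(ξ,γ) = (1/m) [‖ξ‖₂² ε − (ξᵀ x*) ω]. -/

import Mathlib

noncomputable section
open scoped BigOperators
open MeasureTheory ProbabilityTheory

/-- squared Euclidean norm ‖v‖₂² -/
def enormSq {n : ℕ} (v : Fin n → ℝ) : ℝ := ∑ j, v j ^ 2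

/-- Euclidean norm ‖v‖₂ -/
noncomputable def enorm {n : ℕ} (v : Fin n → ℝ) : ℝ := Real.sqrt (enormSq v)

/-- sup norm ‖v‖_∞ -/
noncomputable def supNorm {n : ℕ} (v : Fin n → ℝ) : ℝ := ⨆ j, |v j|

/-- ‖d‖₁ = Σᵢ dᵢ for a positive vector d -/
def dOne {m : ℕ} (d : Fin m → ℝ) : ℝ := ∑ i, d i

/-- x* = (‖d‖₁/m) x -/
def xStar {n m : ℕ} (x : Fin n → ℝ) (d : Fin m → ℝ) : Fin n → ℝ :=
  fun j => (dOne d / m) * x j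

/-- d* = (m/‖d‖₁) d -/
def dStar {m : ℕ} (d : Fin m → ℝ) : Fin m → ℝ := fun i => ((m : ℝ) / dOne d) * d i

/-- the distance Δ(ξ,γ) = ‖ξ−x*‖₂² + (‖x*‖₂²/m)‖γ−d*‖₂² -/
def DeltaDist {n m : ℕ} (x : Fin n → ℝ) (d : Fin m → ℝ) (ξ : Fin n → ℝ) (γ : Fin m → ℝ) : ℝ :=
  enormSq (ξ - xStar x d) + (enormSq (xStar x d) / m) * enormSq (γ - dStar d)

/-- the constraint set C_ρ = {1_m + e : e ∈ 1⊥_m, ‖e‖_∞ ≤ ρ} -/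
def Cset (m : ℕ) (ρ : ℝ) : Set (Fin m → ℝ) :=
  {γ | (∑ i, γ i) = m ∧ ∀ i, |γ i - 1| ≤ ρ}

/-- the neighbourhood D_{κ,ρ} = {(ξ,γ) ∈ ℝⁿ × C_ρ : Δ(ξ,γ) ≤ κ²‖x*‖₂²} -/
def Dset {n m : ℕ} (x : Fin n → ℝ) (d : Fin m → ℝ) (κ ρ : ℝ) :
    Set ((Fin n → ℝ) × (Fin m → ℝ)) :=
  {q | q.2 ∈ Cset m ρ ∧ DeltaDist x d q.1 q.2 ≤ κ ^ 2 * enormSq (xStar x d)}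

/-- residual γ̄ A ξ − d̄ A x -/
def resid {n m : ℕ} (A : Matrix (Fin m) (Fin n) ℝ) (x : Fin n → ℝ) (d : Fin m → ℝ)
    (ξ : Fin n → ℝ) (γ : Fin m → ℝ) : Fin m → ℝ :=
  fun i => γ i * (A.mulVec ξ) i - d i * (A.mulVec x) i

/-- the objective f(ξ,γ) = (1/(2mp)) Σ_l ‖γ̄A_lξ − d̄A_lx‖₂² -/
def objF {n m p : ℕ} (A : Fin p → Matrix (Fin m) (Fin n) ℝ) (x : Fin n → ℝ) (d : Fin m → ℝ)
    (ξ : Fin n → ℝ) (γ : Fin m → ℝ) : ℝ :=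
  (2 * m * p : ℝ)⁻¹ * ∑ l, enormSq (resid (A l) x d ξ γ)

/-- the signal gradient ∇_ξ f(ξ,γ) = (1/(mp)) Σ_l A_lᵀ γ̄ (γ̄A_lξ − d̄A_lx) -/
def gradXi {n m p : ℕ} (A : Fin p → Matrix (Fin m) (Fin n) ℝ) (x : Fin n → ℝ) (d : Fin m → ℝ)
    (ξ : Fin n → ℝ) (γ : Fin m → ℝ) : Fin n → ℝ :=
  fun j => (m * p : ℝ)⁻¹ * ∑ l, ∑ i, A l i j * (γ i * resid (A l) x d ξ γ i)

/-- the gain gradient ∇_γ f(ξ,γ) = (1/(mp)) Σ_l diag(A_lξ)(γ̄A_lξ − d̄A_lx) -/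
def gradGamma {n m p : ℕ} (A : Fin p → Matrix (Fin m) (Fin n) ℝ) (x : Fin n → ℝ) (d : Fin m → ℝ)
    (ξ : Fin n → ℝ) (γ : Fin m → ℝ) : Fin m → ℝ :=
  fun i => (m * p : ℝ)⁻¹ * ∑ l, (A l).mulVec ξ i * resid (A l) x d ξ γ i

/-- the projected gain gradient ∇⊥_γ f = (I_m − (1/m)1_m1_mᵀ) ∇_γ f -/
def gradGammaPerp {n m p : ℕ} (A : Fin p → Matrix (Fin m) (Fin n) ℝ) (x : Fin n → ℝ)
    (d : Fin m → ℝ) (ξ : Fin n → ℝ) (γ : Fin m → ℝ) : Fin m → ℝ :=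
  fun i => gradGamma A x d ξ γ i - (m : ℝ)⁻¹ * ∑ i', gradGamma A x d ξ γ i'


section AuxExpGrad
variable {Ω : Type*} [MeasureSpace Ω]

omit [MeasureSpace Ω] in
private lemma expand_prod' {n m : ℕ} (B : Matrix (Fin m) (Fin n) ℝ) (i : Fin m)
    (x ξ : Fin n → ℝ) (d γ : Fin m → ℝ) :
    B.mulVec ξ i * resid B x d ξ γ i
      = ∑ j, ∑ j', (ξ j * (γ i * ξ j' - d i * x j')) * (B i j * B i j') := by
  have h1 : B.mulVec ξ i = ∑ j, B i j * ξ j := by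
    simp [Matrix.mulVec, dotProduct]
  have h2 : resid B x d ξ γ i = ∑ j', B i j' * (γ i * ξ j' - d i * x j') := by
    simp only [resid, h1]
    rw [show B.mulVec x i = ∑ j, B i j * x j from by simp [Matrix.mulVec, dotProduct]]
    rw [Finset.mul_sum, Finset.mul_sum, ← Finset.sum_sub_distrib]
    congr 1; ext j'; ring
  rw [h1, h2, Finset.sum_mul_sum]
  congr 1; ext j; congr 1; ext j'; ring

private lemma key_integrable' {n m : ℕ} (B : Ω → Matrix (Fin m) (Fin n) ℝ) (i : Fin m)
    (hInt : ∀ j j', Integrable (fun ω => B ω i j * B ω i j') ℙ)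
    (x ξ : Fin n → ℝ) (d γ : Fin m → ℝ) :
    Integrable (fun ω => (B ω).mulVec ξ i * resid (B ω) x d ξ γ i) ℙ := by
  have h : (fun ω => (B ω).mulVec ξ i * resid (B ω) x d ξ γ i)
      = fun ω => ∑ j, ∑ j', (ξ j * (γ i * ξ j' - d i * x j')) * (B ω i j * B ω i j') := by
    funext ω; exact expand_prod' (B ω) i x ξ d γ
  rw [h]
  exact integrable_finset_sum _ fun j _ => integrable_finset_sum _ fun j' _ =>
    ((hInt j j').const_mul _)

private lemma key_integral' {n m : ℕ} (B : Ω → Matrix (Fin m) (Fin n) ℝ) (i : Fin m)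
    (hInt : ∀ j j', Integrable (fun ω => B ω i j * B ω i j') ℙ)
    (hCov : ∀ j j', ∫ ω, B ω i j * B ω i j' = if j = j' then (1 : ℝ) else 0)
    (x ξ : Fin n → ℝ) (d γ : Fin m → ℝ) :
    (∫ ω, (B ω).mulVec ξ i * resid (B ω) x d ξ γ i)
      = γ i * enormSq ξ - d i * ∑ j, ξ j * x j := by
  have h : (fun ω => (B ω).mulVec ξ i * resid (B ω) x d ξ γ i)
      = fun ω => ∑ j, ∑ j', (ξ j * (γ i * ξ j' - d i * x j')) * (B ω i j * B ω i j') := by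
    funext ω; exact expand_prod' (B ω) i x ξ d γ
  rw [h, integral_finset_sum _ fun j _ => integrable_finset_sum _ fun j' _ =>
    ((hInt j j').const_mul _)]
  have h2 : ∀ j : Fin n, (∫ ω, ∑ j', (ξ j * (γ i * ξ j' - d i * x j')) * (B ω i j * B ω i j'))
      = ξ j * (γ i * ξ j - d i * x j) := by
    intro j
    rw [integral_finset_sum _ fun j' _ => ((hInt j j').const_mul _)]
    have h3 : ∀ j' : Fin n, (∫ ω, (ξ j * (γ i * ξ j' - d i * x j')) * (B ω i j * B ω i j'))
        = (ξ j * (γ i * ξ j' - d i * x j')) * (if j = j' then (1:ℝ) else 0) := by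
      intro j'; rw [integral_const_mul, hCov]
    simp only [h3, mul_ite, mul_one, mul_zero]
    simp
  simp only [h2]
  simp only [enormSq, Finset.mul_sum, ← Finset.sum_sub_distrib]
  congr 1; ext j; ring

end AuxExpGrad

/-- **Expected projected gain gradient.**
Writing γ = 1_m + ε and d* = 1_m + ω₀ with ε, ω₀ ∈ 1⊥_m (possible since 1ᵀγ = m and
1ᵀd* = m), one has E ∇⊥_γ f(ξ,γ) = (1/m)[‖ξ‖₂² ε − (ξᵀx*) ω₀]. -/
theorem expected_projected_gain_gradient {Ω : Type*} [MeasureSpace Ω]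
    [IsProbabilityMeasure (ℙ : Measure Ω)]
    {n m p : ℕ} (hn : 0 < n) (hm : 0 < m) (hp : 0 < p)
    (A : Fin p → Ω → Matrix (Fin m) (Fin n) ℝ)
    (hMeas : ∀ l i j, Measurable fun ω => A l ω i j)
    (hIndep : iIndepFun
      (fun (q : Fin m × Fin p) ω => (fun j => A q.2 ω q.1 j)) ℙ)
    (hInt : ∀ l i j j', Integrable (fun ω => A l ω i j * A l ω i j') ℙ)
    (hMean : ∀ l i j, ∫ ω, A l ω i j = 0)
    (hCov : ∀ l i j j', ∫ ω, A l ω i j * A l ω i j' = if j = j' then (1 : ℝ) else 0)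
    (x : Fin n → ℝ) (d : Fin m → ℝ) (hd : ∀ i, 0 < d i)
    (ξ : Fin n → ℝ) (γ : Fin m → ℝ) (hγ : (∑ i, γ i) = m) :
    ∀ i, (∫ ω, gradGammaPerp (fun l => A l ω) x d ξ γ i) =
      (m : ℝ)⁻¹ * (enormSq ξ * (γ i - 1)
        - (∑ j, ξ j * xStar x d j) * (dStar d i - 1)) := by
  intro i
  have hm' : (m : ℝ) ≠ 0 := Nat.cast_ne_zero.mpr hm.ne'
  have hp' : (p : ℝ) ≠ 0 := Nat.cast_ne_zero.mpr hp.ne'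
  have hdOne : dOne d ≠ 0 := by
    have : 0 < dOne d := Finset.sum_pos (fun i _ => hd i)
      (Finset.univ_nonempty_iff.mpr ⟨⟨0, hm⟩⟩)
    exact this.ne'
  set E := enormSq ξ with hE
  set S := ∑ j, ξ j * x j with hS
  -- integrability and value of each gradGamma coordinate
  have hgInt : ∀ i' : Fin m,
      Integrable (fun ω => gradGamma (fun l => A l ω) x d ξ γ i') ℙ := by
    intro i'
    have : (fun ω => gradGamma (fun l => A l ω) x d ξ γ i')
        = fun ω => (m * p : ℝ)⁻¹ *
            ∑ l, (A l ω).mulVec ξ i' * resid (A l ω) x d ξ γ i' := rfl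
    rw [this]
    exact (integrable_finset_sum _ fun l _ =>
      key_integrable' (A l) i' (hInt l i') x ξ d γ).const_mul _
  have hgVal : ∀ i' : Fin m,
      (∫ ω, gradGamma (fun l => A l ω) x d ξ γ i')
        = (m : ℝ)⁻¹ * (γ i' * E - d i' * S) := by
    intro i'
    have h0 : (fun ω => gradGamma (fun l => A l ω) x d ξ γ i')
        = fun ω => (m * p : ℝ)⁻¹ *
            ∑ l, (A l ω).mulVec ξ i' * resid (A l ω) x d ξ γ i' := rfl
    rw [h0, integral_const_mul, integral_finset_sum _ fun l _ =>
      key_integrable' (A l) i' (hInt l i') x ξ d γ]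
    have h1 : ∀ l : Fin p, (∫ ω, (A l ω).mulVec ξ i' * resid (A l ω) x d ξ γ i')
        = γ i' * E - d i' * S := fun l =>
      key_integral' (A l) i' (hInt l i') (hCov l i') x ξ d γ
    simp only [h1, Finset.sum_const, Finset.card_univ, Fintype.card_fin, nsmul_eq_mul]
    field_simp
  -- split the integral
  have hsplit : (fun ω => gradGammaPerp (fun l => A l ω) x d ξ γ i)
      = fun ω => gradGamma (fun l => A l ω) x d ξ γ i
          - (m : ℝ)⁻¹ * ∑ i', gradGamma (fun l => A l ω) x d ξ γ i' := rfl
  rw [hsplit, integral_sub (hgInt i)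
    ((integrable_finset_sum _ fun i' _ => hgInt i').const_mul _),
    integral_const_mul, integral_finset_sum _ fun i' _ => hgInt i']
  simp only [hgVal]
  have hsum : ∑ i' : Fin m, (m : ℝ)⁻¹ * (γ i' * E - d i' * S)
      = (m : ℝ)⁻¹ * ((m : ℝ) * E - dOne d * S) := by
    rw [← Finset.mul_sum]
    congr 1
    rw [Finset.sum_sub_distrib, ← Finset.sum_mul, ← Finset.sum_mul, hγ]
    rfl
  rw [hsum]
  have hx : (∑ j, ξ j * xStar x d j) = (dOne d / m) * S := by
    simp only [xStar, hS, Finset.mul_sum]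
    congr 1; ext j; ring
  rw [hx]
  simp only [dStar]
  field_simp
  ring
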